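/- Let T be a weighted tree rooted at v0 with edge-weight function W, and let f(z) = exp(a·z + b) for real constants a, b. For a vector x indexed by vertices, define s_i = Σ_{j in T_i} f(dist(i,j))·x_j where T_i is the subtree rooted at i and dist is the weighted path distance. Then for any non-root vertex i with parent p(i) and with w_i = Σ_{j in T} f(dist(i,j))·x_j, the identity w_i = exp(a·W(i,p(i)))·w_{p(i)} + (1 − exp(2a·W(i,p(i))))·s_i holds. -/
import Mathlib

/-- In a weighted tree rooted at `v0`, for a non-root vertex `i` with
parent `pi`, edge weight `W = W(i, p(i))`, subtree `Ti` (vertices of the subtree rooted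
at `i`), and `f z = exp (a*z + b)`, we have
`w_i = exp(a*W) * w_{p(i)} + (1 - exp(2*a*W)) * s_i`. The tree structure is encoded by
the two distance identities: for `j` in the subtree of `i`, `dist (p i) j = W + dist i j`,
and for `j` outside it, `dist i j = W + dist (p i) j`. -/
theorem stmt0 {V : Type*} [Fintype V] [DecidableEq V]
    (dist : V → V → ℝ) (x : V → ℝ) (a b : ℝ)
    (i pi : V) (Ti : Finset V) (W : ℝ)
    (h1 : ∀ j ∈ Ti, dist pi j = W + dist i j)
    (h2 : ∀ j ∉ Ti, dist i j = W + dist pi j) :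
    (∑ j, Real.exp (a * dist i j + b) * x j) =
      Real.exp (a * W) * (∑ j, Real.exp (a * dist pi j + b) * x j) +
        (1 - Real.exp (2 * a * W)) * ∑ j ∈ Ti, Real.exp (a * dist i j + b) * x j := by
  have split : ∀ g : V → ℝ, (∑ j, g j) = (∑ j ∈ Ti, g j) + ∑ j ∈ Tiᶜ, g j := by
    intro g
    rw [← Finset.sum_add_sum_compl Ti]
  rw [split (fun j => Real.exp (a * dist i j + b) * x j),
      split (fun j => Real.exp (a * dist pi j + b) * x j)]
  have e1 : (∑ j ∈ Ti, Real.exp (a * dist pi j + b) * x j)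
      = Real.exp (a * W) * ∑ j ∈ Ti, Real.exp (a * dist i j + b) * x j := by
    rw [Finset.mul_sum]
    refine Finset.sum_congr rfl fun j hj => ?_
    rw [h1 j hj, ← mul_assoc, ← Real.exp_add]
    ring_nf
  have e2 : (∑ j ∈ Tiᶜ, Real.exp (a * dist i j + b) * x j)
      = Real.exp (a * W) * ∑ j ∈ Tiᶜ, Real.exp (a * dist pi j + b) * x j := by
    rw [Finset.mul_sum]
    refine Finset.sum_congr rfl fun j hj => ?_
    rw [h2 j (Finset.mem_compl.mp hj), ← mul_assoc, ← Real.exp_add]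
    ring_nf
  rw [e1, e2]
  have : Real.exp (2 * a * W) = Real.exp (a * W) * Real.exp (a * W) := by
    rw [← Real.exp_add]; ring_nf
  rw [this]; ring
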